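/- Let a ∈ ℝ, a ≠ 0, and define v_{i+1} = (1 | a·cos(2iπ/3), a·sin(2iπ/3)) ∈ ℝ^{1,2} for i = 0,1,2, with the Minkowski form x·y = x₀y₀ − x₁y₁ − x₂y₂. Then v₁, v₂, v₃ are linearly independent, each v_i·v_i = 1 − a², and for i ≠ j, v_i·v_j = 1 + a²/2. In particular, if a > 2, then each v_i·v_i < 0 and each 2-dimensional span of two of the vectors is negative definite. -/

import Mathlib

/-- The Minkowski form on `ℝ^{1,n}`. -/
def mink (n : ℕ) (x y : Fin (n + 1) → ℝ) : ℝ :=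
  x 0 * y 0 - ∑ i : Fin n, x i.succ * y i.succ

lemma mink2_eq (x y : Fin 3 → ℝ) :
    mink 2 x y = x 0 * y 0 - (x 1 * y 1 + x 2 * y 2) := by
  simp [mink, Fin.sum_univ_succ]

lemma mink2_expand (x y : Fin 3 → ℝ) (c d : ℝ) :
    mink 2 (c • x + d • y) (c • x + d • y) =
      c ^ 2 * mink 2 x x + 2 * c * d * mink 2 x y + d ^ 2 * mink 2 y y := by
  simp only [mink2_eq, Pi.add_apply, Pi.smul_apply, smul_eq_mul]
  ring

theorem stmt16 (a : ℝ) (ha : a ≠ 0)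
    (v : Fin 3 → (Fin 3 → ℝ))
    (hv : ∀ i : Fin 3, v i =
      ![1, a * Real.cos (2 * (i : ℕ) * Real.pi / 3),
           a * Real.sin (2 * (i : ℕ) * Real.pi / 3)]) :
    LinearIndependent ℝ v ∧
    (∀ i, mink 2 (v i) (v i) = 1 - a ^ 2) ∧
    (∀ i j, i ≠ j → mink 2 (v i) (v j) = 1 + a ^ 2 / 2) ∧
    (2 < a →
      (∀ i, mink 2 (v i) (v i) < 0) ∧
      (∀ i j, i ≠ j →
        ∀ w ∈ Submodule.span ℝ ({v i, v j} : Set (Fin 3 → ℝ)),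
          w ≠ 0 → mink 2 w w < 0)) := by
  have hs3 : Real.sqrt 3 ^ 2 = 3 := Real.sq_sqrt (by norm_num)
  have hs3pos : (0:ℝ) < Real.sqrt 3 := Real.sqrt_pos.2 (by norm_num)
  have e0 : (2 * ((0 : Fin 3) : ℕ) * Real.pi / 3 : ℝ) = 0 := by norm_num
  have e1 : (2 * ((1 : Fin 3) : ℕ) * Real.pi / 3 : ℝ) = 2 * Real.pi / 3 := by norm_num
  have e2 : (2 * ((2 : Fin 3) : ℕ) * Real.pi / 3 : ℝ) = 2 * 2 * Real.pi / 3 := by norm_num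
  have c1 : Real.cos (2 * Real.pi / 3) = -(1/2) := by
    have h : 2 * Real.pi / 3 = Real.pi - Real.pi/3 := by ring
    rw [h, Real.cos_pi_sub, Real.cos_pi_div_three]
  have s1 : Real.sin (2 * Real.pi / 3) = Real.sqrt 3 / 2 := by
    have h : 2 * Real.pi / 3 = Real.pi - Real.pi/3 := by ring
    rw [h, Real.sin_pi_sub, Real.sin_pi_div_three]
  have c2 : Real.cos (2 * 2 * Real.pi / 3) = -(1/2) := by
    have h : 2 * 2 * Real.pi / 3 = Real.pi - (-(Real.pi/3)) := by ring
    rw [h, Real.cos_pi_sub, Real.cos_neg, Real.cos_pi_div_three]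
  have s2 : Real.sin (2 * 2 * Real.pi / 3) = -(Real.sqrt 3 / 2) := by
    have h : 2 * 2 * Real.pi / 3 = Real.pi - (-(Real.pi/3)) := by ring
    rw [h, Real.sin_pi_sub, Real.sin_neg, Real.sin_pi_div_three]
  have h0 : v 0 = ![1, a, 0] := by
    rw [hv 0, e0, Real.cos_zero, Real.sin_zero]; norm_num
  have h1 : v 1 = ![1, -(a/2), a * Real.sqrt 3 / 2] := by
    rw [hv 1, e1, c1, s1]; congr 1 <;> ring_nf
  have h2 : v 2 = ![1, -(a/2), -(a * Real.sqrt 3 / 2)] := by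
    rw [hv 2, e2, c2, s2]; congr 1 <;> ring_nf
  have m00 : mink 2 (v 0) (v 0) = 1 - a ^ 2 := by
    rw [mink2_eq, h0]; simp; ring
  have m11 : mink 2 (v 1) (v 1) = 1 - a ^ 2 := by
    rw [mink2_eq, h1]; simp; linear_combination (a^2/4) * hs3
  have m22 : mink 2 (v 2) (v 2) = 1 - a ^ 2 := by
    rw [mink2_eq, h2]; simp; linear_combination (a^2/4) * hs3
  have m01 : mink 2 (v 0) (v 1) = 1 + a ^ 2 / 2 := by
    rw [mink2_eq, h0, h1]; simp; ring
  have m10 : mink 2 (v 1) (v 0) = 1 + a ^ 2 / 2 := by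
    rw [mink2_eq, h1, h0]; simp; ring
  have m02 : mink 2 (v 0) (v 2) = 1 + a ^ 2 / 2 := by
    rw [mink2_eq, h0, h2]; simp; ring
  have m20 : mink 2 (v 2) (v 0) = 1 + a ^ 2 / 2 := by
    rw [mink2_eq, h2, h0]; simp; ring
  have m12 : mink 2 (v 1) (v 2) = 1 + a ^ 2 / 2 := by
    rw [mink2_eq, h1, h2]; simp; linear_combination (a^2/4) * hs3
  have m21 : mink 2 (v 2) (v 1) = 1 + a ^ 2 / 2 := by
    rw [mink2_eq, h2, h1]; simp; linear_combination (a^2/4) * hs3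
  have hself : ∀ i, mink 2 (v i) (v i) = 1 - a ^ 2 := by
    intro i; fin_cases i
    · exact m00
    · exact m11
    · exact m22
  have hcross : ∀ i j, i ≠ j → mink 2 (v i) (v j) = 1 + a ^ 2 / 2 := by
    intro i j hij
    fin_cases i <;> fin_cases j <;> first
      | exact absurd rfl hij
      | exact m01 | exact m02 | exact m10 | exact m12 | exact m20 | exact m21
  refine ⟨?_, hself, hcross, ?_⟩
  · have hli : LinearIndependent ℝ (fun i => (Matrix.of v) i) := by
      rw [show (fun i => (Matrix.of v) i) = (Matrix.of v).row from rfl,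
        Matrix.linearIndependent_rows_iff_isUnit, Matrix.isUnit_iff_isUnit_det,
        isUnit_iff_ne_zero]
      have hdet : (Matrix.of v).det = 3 * Real.sqrt 3 / 2 * a ^ 2 := by
        rw [Matrix.det_fin_three]
        simp only [Matrix.of_apply, h0, h1, h2, Matrix.cons_val_zero, Matrix.cons_val_one,
          Matrix.head_cons, Matrix.cons_val_two, Matrix.tail_cons]
        ring
      rw [hdet]
      positivity
    exact hli
  · intro ha2
    have hself' : ∀ i, mink 2 (v i) (v i) < 0 := by
      intro i; rw [hself i]; nlinarith
    refine ⟨hself', ?_⟩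
    intro i j hij w hw hwne
    rcases Submodule.mem_span_pair.1 hw with ⟨c, d, rfl⟩
    have hcd : c ≠ 0 ∨ d ≠ 0 := by
      by_contra h
      push_neg at h
      exact hwne (by rw [h.1, h.2]; simp)
    rw [mink2_expand, hself i, hself j, hcross i j hij]
    have hc2 : 0 < c ^ 2 + d ^ 2 := by
      rcases hcd with h | h <;> positivity
    nlinarith [mul_pos (show (0:ℝ) < a^2/2 - 2 by nlinarith) hc2,
      mul_nonneg (show (0:ℝ) ≤ 1 + a^2/2 by positivity) (sq_nonneg (c - d))]
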